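/- Every graph on n vertices has at most 3^(n/3) minimal vertex covers. -/

import Mathlib

open Finset



open scoped Classical in
/-- Independent set. -/
def Indep {V : Type*} (G : SimpleGraph V) (I : Finset V) : Prop :=
  ∀ ⦃v⦄, v ∈ I → ∀ ⦃w⦄, w ∈ I → ¬ G.Adj v w

/-- Maximal independent subset of `A`. -/
def MISOn {V : Type*} (G : SimpleGraph V) (A I : Finset V) : Prop :=
  I ⊆ A ∧ Indep G I ∧ ∀ J ⊆ A, I ⊂ J → ¬ Indep G J

lemma aux_cube : ∀ t : ℕ, (t : ℝ) ≤ (3:ℝ) ^ ((t : ℝ) / 3) := by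
  have hc : (0:ℝ) < (3:ℝ) ^ ((1:ℝ)/3) := Real.rpow_pos_of_pos (by norm_num) _
  have hc3 : ((3:ℝ) ^ ((1:ℝ)/3)) ^ (3:ℕ) = 3 := by
    rw [← Real.rpow_natCast ((3:ℝ) ^ ((1:ℝ)/3)) 3, ← Real.rpow_mul (by norm_num)]
    norm_num
  have hkey : ∀ t : ℕ, (t : ℝ) ≤ ((3:ℝ) ^ ((1:ℝ)/3)) ^ t := by
    intro t
    induction t with
    | zero => simp
    | succ n ih =>
      rcases Nat.lt_or_ge n 3 with h | h
      · interval_cases n <;> nlinarith [hc, hc3, sq_nonneg ((3:ℝ)^((1:ℝ)/3) - 1), sq_nonneg ((3:ℝ)^((1:ℝ)/3))]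
      · have hn : (3:ℝ) ≤ n := by exact_mod_cast h
        have hge : (4:ℝ)/3 ≤ (3:ℝ) ^ ((1:ℝ)/3) := by
          nlinarith [hc, hc3, sq_nonneg ((3:ℝ)^((1:ℝ)/3) + 4/3), sq_nonneg ((3:ℝ)^((1:ℝ)/3) - 4/3)]
        have : ((3:ℝ) ^ ((1:ℝ)/3)) ^ (n+1) = (3:ℝ)^((1:ℝ)/3) * ((3:ℝ)^((1:ℝ)/3))^n := by ring
        rw [this]
        push_cast
        nlinarith [ih, hc, pow_pos hc n]
  intro t
  calc (t:ℝ) ≤ ((3:ℝ) ^ ((1:ℝ)/3)) ^ t := hkey t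
    _ = (3:ℝ) ^ ((t:ℝ)/3) := by
        rw [← Real.rpow_natCast ((3:ℝ) ^ ((1:ℝ)/3)) t, ← Real.rpow_mul (by norm_num)]
        ring_nf

open scoped Classical in
lemma key {V : Type*} [Fintype V] (G : SimpleGraph V) :
    ∀ A : Finset V,
      (((univ : Finset (Finset V)).filter (MISOn G A)).card : ℝ) ≤
        (3:ℝ) ^ ((A.card : ℝ) / 3) := by
  intro A
  induction A using Finset.strongInduction with
  | _ A ih =>
    rcases A.eq_empty_or_nonempty with rfl | hA
    · have h1 : (univ : Finset (Finset V)).filter (MISOn G ∅) = {∅} := by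
        ext I
        simp only [mem_filter, mem_univ, true_and, mem_singleton, MISOn]
        constructor
        · rintro ⟨h1, -, -⟩; exact subset_empty.mp h1
        · rintro rfl
          refine ⟨subset_rfl, fun v hv => absurd hv (notMem_empty v), ?_⟩
          intro J hJ hss
          rw [subset_empty] at hJ
          subst hJ
          exact absurd hss (by simp)
      rw [h1]
      simp
    · -- choose vertex of minimum degree in A
      set deg : V → ℕ := fun u => (A.filter (G.Adj u)).card with hdeg
      obtain ⟨v, hvA, hvmin⟩ := A.exists_min_image deg hA
      set N : V → Finset V := fun u => insert u (A.filter (G.Adj u)) with hN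
      have hNA : ∀ u ∈ A, N u ⊆ A := by
        intro u hu
        exact insert_subset hu (filter_subset _ _)
      have hNcard : ∀ u, (N u).card = deg u + 1 := by
        intro u
        have : u ∉ A.filter (G.Adj u) := by simp [G.irrefl]
        simp [hN, card_insert_of_notMem this, hdeg]
      -- every maximal independent set meets N v
      have hcover : (univ : Finset (Finset V)).filter (MISOn G A) ⊆
          (N v).biUnion (fun u => (univ : Finset (Finset V)).filter
            (fun I => MISOn G A I ∧ u ∈ I)) := by
        intro I hI
        rw [mem_filter] at hI
        obtain ⟨-, hIA, hind, hmax⟩ := hI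
        by_contra hcon
        simp only [mem_biUnion, mem_filter, mem_univ, true_and, not_exists] at hcon
        have hdisj : ∀ u ∈ N v, u ∉ I := by
          intro u hu hui
          exact hcon u ⟨hu, ⟨hIA, hind, hmax⟩, hui⟩
        have hvI : v ∉ I := hdisj v (mem_insert_self _ _)
        refine hmax (insert v I) (insert_subset hvA hIA) (ssubset_insert hvI) ?_
        intro x hx y hy hadj
        rcases mem_insert.mp hx with rfl | hxI
        · rcases mem_insert.mp hy with rfl | hyI
          · exact G.irrefl hadj
          · exact hdisj y (mem_insert_of_mem (mem_filter.mpr ⟨hIA hyI, hadj⟩)) hyI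
        · rcases mem_insert.mp hy with rfl | hyI
          · exact hdisj x (mem_insert_of_mem (mem_filter.mpr ⟨hIA hxI, hadj.symm⟩)) hxI
          · exact hind hxI hyI hadj
      -- for u ∈ N v, maximal independent sets containing u inject into MIS of A \ N u
      have hinj : ∀ u ∈ N v,
          ((univ : Finset (Finset V)).filter (fun I => MISOn G A I ∧ u ∈ I)).card ≤
          ((univ : Finset (Finset V)).filter (MISOn G (A \ N u))).card := by
        intro u hu
        have huA : u ∈ A := hNA v hvA hu
        apply Finset.card_le_card_of_injOn (fun I => I.erase u)
        · intro I hI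
          rw [mem_coe, mem_filter] at hI ⊢
          obtain ⟨-, ⟨hIA, hind, hmax⟩, huI⟩ := hI
          refine ⟨mem_univ _, ?_, fun x hx y hy hadj =>
            hind (mem_of_mem_erase hx) (mem_of_mem_erase hy) hadj, ?_⟩
          · intro x hx
            have hxI := mem_of_mem_erase hx
            have hxu : x ≠ u := ne_of_mem_erase hx
            refine mem_sdiff.mpr ⟨hIA hxI, ?_⟩
            intro hxN
            rcases mem_insert.mp hxN with rfl | hxf
            · exact hxu rfl
            · exact hind huI hxI (mem_filter.mp hxf).2
          · intro J hJ hss hindJ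
            have hJNu : ∀ x ∈ J, x ∉ N u := fun x hx => (mem_sdiff.mp (hJ hx)).2
            have huJ : u ∉ J := fun h => hJNu u h (mem_insert_self _ _)
            refine hmax (insert u J) (insert_subset huA (fun x hx => (mem_sdiff.mp (hJ hx)).1)) ?_ ?_
            · have hsub : I ⊆ insert u J := by
                intro x hx
                rcases Decidable.eq_or_ne x u with rfl | hxu
                · exact mem_insert_self _ _
                · exact mem_insert_of_mem (hss.1 (mem_erase.mpr ⟨hxu, hx⟩))
              rw [Finset.ssubset_iff_of_subset hsub]
              obtain ⟨y, hyJ, hyI⟩ := exists_of_ssubset hss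
              have hyu : y ≠ u := fun h => huJ (h ▸ hyJ)
              exact ⟨y, mem_insert_of_mem hyJ, fun hyI2 => hyI (mem_erase.mpr ⟨hyu, hyI2⟩)⟩
            · intro x hx y hy hadj
              rcases mem_insert.mp hx with rfl | hxJ
              · rcases mem_insert.mp hy with rfl | hyJ
                · exact G.irrefl hadj
                · exact hJNu y hyJ (mem_insert_of_mem (mem_filter.mpr ⟨(mem_sdiff.mp (hJ hyJ)).1, hadj⟩))
              · rcases mem_insert.mp hy with rfl | hyJ
                · exact hJNu x hxJ (mem_insert_of_mem (mem_filter.mpr ⟨(mem_sdiff.mp (hJ hxJ)).1, hadj.symm⟩))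
                · exact hindJ hxJ hyJ hadj
        · intro I hI I' hI' heq
          rw [mem_coe, mem_filter] at hI hI'
          have h1 : insert u (I.erase u) = I := insert_erase hI.2.2
          have h2 : insert u (I'.erase u) = I' := insert_erase hI'.2.2
          rw [← h1, ← h2]
          exact congrArg (insert u) heq
      -- assemble the counting
      have step1 : (((univ : Finset (Finset V)).filter (MISOn G A)).card : ℝ) ≤
          ∑ u ∈ N v, (((univ : Finset (Finset V)).filter (MISOn G (A \ N u))).card : ℝ) := by
        have h := le_trans (card_le_card hcover)
          (le_trans Finset.card_biUnion_le (Finset.sum_le_sum hinj))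
        exact_mod_cast h
      have step2 : ∀ u ∈ N v,
          (((univ : Finset (Finset V)).filter (MISOn G (A \ N u))).card : ℝ) ≤
          (3:ℝ) ^ (((A.card : ℝ) - ((deg v : ℝ) + 1)) / 3) := by
        intro u hu
        have huA : u ∈ A := hNA v hvA hu
        have hss : A \ N u ⊂ A :=
          Finset.sdiff_ssubset (hNA u huA) ⟨u, mem_insert_self _ _⟩
        refine le_trans (ih _ hss) (Real.rpow_le_rpow_of_exponent_le (by norm_num) ?_)
        have hle : (N u).card ≤ A.card := card_le_card (hNA u huA)
        have hcard : ((A \ N u).card : ℝ) = (A.card : ℝ) - ((deg u : ℝ) + 1) := by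
          rw [card_sdiff_of_subset (hNA u huA), Nat.cast_sub hle, hNcard u]
          push_cast
          ring
        rw [hcard]
        have hdv : (deg v : ℝ) ≤ (deg u : ℝ) := by exact_mod_cast hvmin u huA
        linarith
      have step3 : (((univ : Finset (Finset V)).filter (MISOn G A)).card : ℝ) ≤
          ((deg v : ℝ) + 1) * (3:ℝ) ^ (((A.card : ℝ) - ((deg v : ℝ) + 1)) / 3) := by
        refine le_trans step1 (le_trans (Finset.sum_le_sum step2) ?_)
        rw [Finset.sum_const, hNcard v, nsmul_eq_mul]
        push_cast
        ring_nf
        exact le_refl _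

      have htn : (deg v : ℝ) + 1 ≤ (A.card : ℝ) := by
        have := card_le_card (hNA v hvA)
        rw [hNcard v] at this
        exact_mod_cast this
      have haux := aux_cube (deg v + 1)
      push_cast at haux
      have hsplit : (3:ℝ) ^ ((A.card : ℝ)/3) =
          (3:ℝ) ^ (((deg v : ℝ) + 1)/3) * (3:ℝ) ^ (((A.card : ℝ) - ((deg v : ℝ) + 1))/3) := by
        rw [← Real.rpow_add (by norm_num)]
        ring_nf
      rw [hsplit]
      exact le_trans step3
        (mul_le_mul_of_nonneg_right haux (Real.rpow_nonneg (by norm_num) _))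


/-- `C` is a vertex cover of `G`. -/
def IsVC {V : Type*} (G : SimpleGraph V) (C : Finset V) : Prop :=
  ∀ ⦃v w : V⦄, G.Adj v w → v ∈ C ∨ w ∈ C

/-- Moon–Moser bound: every graph on `n` vertices has at most `3^(n/3)` minimal
vertex covers. -/
theorem stmt19 {V : Type*} [Fintype V] (G : SimpleGraph V) :
    ({C : Finset V | IsVC G C ∧ ∀ C' ⊂ C, ¬ IsVC G C'}.ncard : ℝ) ≤
      (3 : ℝ) ^ ((Fintype.card V : ℝ) / 3) := by
  classical
  have hVC : ∀ C : Finset V, IsVC G C ↔ Indep G Cᶜ := by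
    intro C
    constructor
    · intro h v hv w hw hadj
      rcases h hadj with h' | h'
      · exact (Finset.mem_compl.mp hv) h'
      · exact (Finset.mem_compl.mp hw) h'
    · intro h v w hadj
      by_contra hcon
      push_neg at hcon
      exact h (Finset.mem_compl.mpr hcon.1) (Finset.mem_compl.mpr hcon.2) hadj
  have himg : (fun C : Finset V => Cᶜ) '' {C : Finset V | IsVC G C ∧ ∀ C' ⊂ C, ¬ IsVC G C'} =
      {I : Finset V | MISOn G univ I} := by
    ext I
    simp only [Set.mem_image, Set.mem_setOf_eq]
    constructor
    · rintro ⟨C, ⟨hC, hmin⟩, rfl⟩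
      refine ⟨subset_univ _, (hVC C).mp hC, ?_⟩
      intro J _ hss hindJ
      have hJC : Jᶜ ⊂ C := by
        have : Jᶜ ⊂ Cᶜᶜ := Finset.compl_ssubset_compl.mpr hss
        simpa using this
      exact hmin Jᶜ hJC ((hVC Jᶜ).mpr (by simpa using hindJ))
    · rintro ⟨-, hind, hmax⟩
      refine ⟨Iᶜ, ⟨(hVC Iᶜ).mpr (by simpa using hind), ?_⟩, by simp⟩
      intro C' hss hC'
      have hss' : Iᶜᶜ ⊂ C'ᶜ := Finset.compl_ssubset_compl.mpr hss
      rw [compl_compl] at hss'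
      exact hmax C'ᶜ (subset_univ _) hss' ((hVC C').mp hC')
  have hinj : Function.Injective (fun C : Finset V => Cᶜ) := fun a b h => by
    simpa using congrArg compl h
  have h1 : {C : Finset V | IsVC G C ∧ ∀ C' ⊂ C, ¬ IsVC G C'}.ncard
      = {I : Finset V | MISOn G univ I}.ncard := by
    rw [← himg, Set.ncard_image_of_injective _ hinj]
  have h2 : {I : Finset V | MISOn G univ I} =
      ↑((univ : Finset (Finset V)).filter (MISOn G univ)) := by
    ext I; simp
  rw [h1, h2, Set.ncard_coe_finset]
  have := key G (univ : Finset V)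
  rwa [card_univ] at this
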